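/- For positive integers n and m, (1/(m!)^n) · #{τ ∈ S_{nm} : τ²σ⁻¹ ∈ S_m^n} = #{A ∈ M(n,m) : σ·A^T = A} for every σ ∈ S_n. -/

import Mathlib

open Matrix

/-- The index of the block `P_i` containing `k`. -/
def blk {n m : ℕ} (hm : 0 < m) (k : Fin (n * m)) : Fin n :=
  ⟨(k : ℕ) / m, (Nat.div_lt_iff_lt_mul hm).mpr k.isLt⟩

namespace Stmt6

open Finset

variable {n m : ℕ}

lemma sigFin_ext {A : Fin n → ℕ} {s t : Σ i, Fin (A i)} (h1 : s.1 = t.1)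
    (h2 : (s.2 : ℕ) = (t.2 : ℕ)) : s = t := by
  rcases s with ⟨i, a⟩
  rcases t with ⟨j, b⟩
  cases h1
  exact congrArg _ (Fin.ext h2)

lemma rank_val_congr {s s' : Finset (Fin m)} {k k' : ℕ} (hss : s = s')
    (h : s.card = k) (h' : s'.card = k') {z z' : Fin m} (hz : z ∈ s) (hz' : z' ∈ s')
    (hzz : z = z') :
    (((s.orderIsoOfFin h).symm ⟨z, hz⟩ : Fin k) : ℕ)
      = (((s'.orderIsoOfFin h').symm ⟨z', hz'⟩ : Fin k') : ℕ) := by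
  subst hss; subst hzz
  obtain rfl : k = k' := h.symm.trans h'
  rfl

lemma nth_val_congr {s s' : Finset (Fin m)} {k k' : ℕ} (hss : s = s')
    (h : s.card = k) (h' : s'.card = k') {t : Fin k} {t' : Fin k'} (ht : (t : ℕ) = (t' : ℕ)) :
    (((s.orderIsoOfFin h) t : Fin m) : ℕ) = (((s'.orderIsoOfFin h') t' : Fin m) : ℕ) := by
  subst hss
  obtain rfl : k = k' := h.symm.trans h'
  obtain rfl : t = t' := Fin.ext ht
  rfl

section Decode

variable (σ : Equiv.Perm (Fin n)) {A : Fin n → Fin n → ℕ}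
  (α : ∀ j, Fin m ≃ Σ i, Fin (A i j))

/-- `Qs r i` : elements of block `i` whose label (under `α i`) has first component `r`. -/
def Qs (r i : Fin n) : Finset (Fin m) := univ.filter fun z => ((α i) z).1 = r

lemma mem_Qs {r i : Fin n} {z : Fin m} : z ∈ Qs α r i ↔ ((α i) z).1 = r := by
  simp [Qs]

lemma Qs_card (r i : Fin n) : (Qs α r i).card = A r i := by
  have e1 : {z : Fin m // ((α i) z).1 = r} ≃ {p : Σ i', Fin (A i' i) // p.1 = r} :=
    (α i).subtypeEquiv (fun z => Iff.rfl)
  have e2 : {p : Σ i', Fin (A i' i) // p.1 = r} ≃ Fin (A r i) :=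
    { toFun := fun p => Fin.cast (by rw [p.2]) p.1.2
      invFun := fun t => ⟨⟨r, t⟩, rfl⟩
      left_inv := by
        rintro ⟨⟨i', t⟩, h⟩
        dsimp at h
        subst h
        simp [Fin.ext_iff]
      right_inv := by
        intro t
        simp [Fin.ext_iff] }
  have : (Qs α r i) = univ.filter fun z => ((α i) z).1 = r := rfl
  rw [this, ← Fintype.card_subtype]
  rw [Fintype.card_congr (e1.trans e2), Fintype.card_fin]

/-- order iso between `Fin (A r i)` and `Qs r i`. -/
def oio (r i : Fin n) : Fin (A r i) ≃o {x // x ∈ Qs α r i} :=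
  (Qs α r i).orderIsoOfFin (Qs_card α r i)

variable (hsym : ∀ i j, A (σ j) i = A i j)

def decFun : Fin n × Fin m → Fin n × Fin m := fun p =>
  ((α p.1 p.2).1,
    (oio α (σ p.1) (α p.1 p.2).1
      (Fin.cast (hsym (α p.1 p.2).1 p.1).symm (α p.1 p.2).2) : Fin m))

def decInv : Fin n × Fin m → Fin n × Fin m := fun p =>
  (σ⁻¹ ((α p.1) p.2).1,
    (α (σ⁻¹ ((α p.1) p.2).1)).symm
      ⟨p.1, Fin.cast (by simpa using hsym p.1 (σ⁻¹ ((α p.1) p.2).1))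
        ((oio α ((α p.1) p.2).1 p.1).symm ⟨p.2, (mem_Qs α).mpr rfl⟩)⟩)

end Decode

section Decode2

variable (σ : Equiv.Perm (Fin n)) {A : Fin n → Fin n → ℕ}
  (α : ∀ j, Fin m ≃ Σ i, Fin (A i j))
  (hsym : ∀ i j, A (σ j) i = A i j)

lemma symm_val_congr {j j' : Fin n} (hjj : j = j') (q : Σ i, Fin (A i j))
    (q' : Σ i', Fin (A i' j')) (h1 : q.1 = q'.1) (h2 : (q.2 : ℕ) = (q'.2 : ℕ)) :
    (α j).symm q = (α j').symm q' := by
  subst hjj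
  exact congrArg _ (sigFin_ext h1 h2)

lemma dec_left_inv : ∀ p, decInv σ α hsym (decFun σ α hsym p) = p := by
  rintro ⟨j, x⟩
  set i := (α j x).1 with hi
  set t : Fin (A (σ j) i) := Fin.cast (hsym i j).symm (α j x).2 with ht
  set w : Fin m := ↑(oio α (σ j) i t) with hw
  have hwmem : w ∈ Qs α (σ j) i := (oio α (σ j) i t).2
  have hr : ((α i) w).1 = σ j := (mem_Qs α).mp hwmem
  have hdf : decFun σ α hsym (j, x) = (i, w) := rfl
  rw [hdf]
  show (σ⁻¹ ((α i) w).1,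
    (α (σ⁻¹ ((α i) w).1)).symm
      ⟨i, Fin.cast (by simpa using hsym i (σ⁻¹ ((α i) w).1))
        ((oio α ((α i) w).1 i).symm ⟨w, (mem_Qs α).mpr rfl⟩)⟩) = (j, x)
  have hfst : σ⁻¹ ((α i) w).1 = j := by rw [hr]; simp
  refine Prod.ext hfst ?_
  show (α (σ⁻¹ ((α i) w).1)).symm
      ⟨i, Fin.cast (by simpa using hsym i (σ⁻¹ ((α i) w).1))
        ((oio α ((α i) w).1 i).symm ⟨w, (mem_Qs α).mpr rfl⟩)⟩ = x
  have hx : x = (α j).symm (α j x) := (Equiv.symm_apply_apply _ _).symm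
  rw [hx]
  refine symm_val_congr α hfst _ _ rfl ?_
  -- value computation
  have hval : ((((oio α ((α i) w).1 i).symm ⟨w, (mem_Qs α).mpr rfl⟩) : Fin _) : ℕ)
      = (((oio α (σ j) i).symm ⟨w, hwmem⟩ : Fin _) : ℕ) := by
    refine rank_val_congr (by rw [hr]) _ _ _ _ rfl
  have hrt : (oio α (σ j) i).symm ⟨w, hwmem⟩ = t := by
    have : (⟨w, hwmem⟩ : {x // x ∈ Qs α (σ j) i}) = oio α (σ j) i t := Subtype.ext rfl
    rw [this, OrderIso.symm_apply_apply]
  simp only [Fin.coe_cast, hval, hrt, ht]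

lemma dec_right_inv : ∀ p, decFun σ α hsym (decInv σ α hsym p) = p := by
  rintro ⟨i, z⟩
  set r := ((α i) z).1 with hrdef
  set s : Fin (A r i) := (oio α r i).symm ⟨z, (mem_Qs α).mpr rfl⟩ with hs
  set j := σ⁻¹ r with hj
  set u : Fin (A i j) := Fin.cast (by simpa [hj] using hsym i (σ⁻¹ r)) s with hu
  set x : Fin m := (α j).symm ⟨i, u⟩ with hx
  have hdi : decInv σ α hsym (i, z) = (j, x) := rfl
  rw [hdi]
  have hαx : α j x = ⟨i, u⟩ := Equiv.apply_symm_apply _ _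
  show ((α j x).1, (oio α (σ j) (α j x).1
      (Fin.cast (hsym (α j x).1 j).symm (α j x).2) : Fin m)) = (i, z)
  have hσj : σ j = r := by rw [hj]; simp
  refine Prod.ext (by rw [hαx]) ?_
  have hval : ((oio α (σ j) (α j x).1
      (Fin.cast (hsym (α j x).1 j).symm (α j x).2) : Fin m) : ℕ)
      = ((oio α r i s : Fin m) : ℕ) := by
    refine nth_val_congr (by rw [hσj, hαx]) _ _ ?_
    have h2 : ((((α j) x).snd : Fin (A ((α j) x).fst j)) : ℕ) = (u : ℕ) :=
      congrArg (fun q : Σ i', Fin (A i' j) => ((q.2 : Fin (A q.1 j)) : ℕ)) hαx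
    simp only [Fin.coe_cast]
    rw [h2, hu, Fin.coe_cast]
  have : (oio α r i s : Fin m) = z := by
    rw [hs, OrderIso.apply_symm_apply]
  apply Fin.ext
  rw [hval, this]

def dec : Equiv.Perm (Fin n × Fin m) :=
  ⟨decFun σ α hsym, decInv σ α hsym, dec_left_inv σ α hsym, dec_right_inv σ α hsym⟩

lemma dec_fst (p : Fin n × Fin m) : ((dec σ α hsym p).1 : Fin n) = (α p.1 p.2).1 := rfl

lemma dec_cond : ∀ p, (dec σ α hsym (dec σ α hsym p)).1 = σ p.1 := by
  intro p
  have hwmem : (dec σ α hsym p).2 ∈ Qs α (σ p.1) (dec σ α hsym p).1 :=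
    (oio α (σ p.1) (α p.1 p.2).1 _).2
  have := (mem_Qs α).mp hwmem
  calc (dec σ α hsym (dec σ α hsym p)).1
      = ((α (dec σ α hsym p).1) (dec σ α hsym p).2).1 := rfl
    _ = σ p.1 := this

end Decode2

section Encode

variable (σ : Equiv.Perm (Fin n)) (τ : Equiv.Perm (Fin n × Fin m))

def QT (r i : Fin n) : Finset (Fin m) := univ.filter fun z => (τ (i, z)).1 = r

lemma mem_QT {r i : Fin n} {z : Fin m} : z ∈ QT τ r i ↔ (τ (i, z)).1 = r := by
  simp [QT]

def Amat : Fin n → Fin n → ℕ := fun r i => (QT τ r i).card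

lemma QT_card (r i : Fin n) : (QT τ r i).card = Amat τ r i := rfl

lemma Amat_sym (hτ : ∀ p, (τ (τ p)).1 = σ p.1) :
    ∀ i j, Amat τ (σ j) i = Amat τ i j := by
  intro i j
  refine (Finset.card_bij (fun x _ => (τ (j, x)).2) ?_ ?_ ?_).symm
  · intro x hx
    have h1 := (mem_QT τ).mp hx
    have h2 : (i, (τ (j, x)).2) = τ (j, x) := by rw [← h1]
    rw [mem_QT, h2, hτ]
  · intro x₁ hx₁ x₂ hx₂ heq
    have h1 := (mem_QT τ).mp hx₁
    have h2 := (mem_QT τ).mp hx₂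
    have : τ (j, x₁) = τ (j, x₂) := Prod.ext (h1.trans h2.symm) heq
    have := τ.injective this
    exact (Prod.mk.injEq _ _ _ _).mp this |>.2
  · intro z hz
    have hz' := (mem_QT τ).mp hz
    set p := τ.symm (i, z) with hpdef
    have hp : τ p = (i, z) := τ.apply_symm_apply _
    have h1 : σ p.1 = σ j := by
      have := hτ p
      rw [hp] at this
      rw [← this, hz']
    have hp1 : p.1 = j := σ.injective h1
    have hjp : (j, p.2) = p := by rw [← hp1]
    refine ⟨p.2, ?_, ?_⟩
    · rw [mem_QT, hjp, hp]
    · show (τ (j, p.2)).2 = z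
      rw [hjp, hp]

lemma Amat_colsum : ∀ j, ∑ i, Amat τ i j = m := by
  intro j
  have h := Finset.card_eq_sum_card_fiberwise
    (f := fun x : Fin m => (τ (j, x)).1) (s := univ) (t := univ) (fun x _ => mem_univ _)
  have h2 : (univ : Finset (Fin m)).card = m := by simp
  rw [h2] at h
  exact (Finset.sum_congr rfl fun i _ => rfl).trans h.symm

lemma Amat_rowsum (hτ : ∀ p, (τ (τ p)).1 = σ p.1) : ∀ i, ∑ j, Amat τ i j = m := by
  intro i
  have h1 : ∑ j, Amat τ i j = ∑ j, Amat τ (σ j) i :=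
    Finset.sum_congr rfl fun j _ => (Amat_sym σ τ hτ i j).symm
  rw [h1]
  rw [Equiv.sum_comp σ (fun r => Amat τ r i)]
  exact Amat_colsum τ i

variable (hτ : ∀ p, (τ (τ p)).1 = σ p.1)

def encFun (j : Fin n) (x : Fin m) : Σ i, Fin (Amat τ i j) :=
  ⟨(τ (j, x)).1, Fin.cast (Amat_sym σ τ hτ (τ (j, x)).1 j)
    (((QT τ (σ j) (τ (j, x)).1).orderIsoOfFin (QT_card τ _ _)).symm
      ⟨(τ (j, x)).2, (mem_QT τ).mpr (hτ (j, x))⟩)⟩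

def encInv (j : Fin n) (q : Σ i, Fin (Amat τ i j)) : Fin m :=
  (τ.symm (q.1, (((QT τ (σ j) q.1).orderIsoOfFin (QT_card τ _ _))
    (Fin.cast (Amat_sym σ τ hτ q.1 j).symm q.2) : Fin m))).2

lemma enc_left_inv (j : Fin n) : ∀ x, encInv σ τ hτ j (encFun σ τ hτ j x) = x := by
  intro x
  set i₀ := (τ (j, x)).1 with hi₀
  set rk : Fin (Amat τ (σ j) i₀) :=
    ((QT τ (σ j) i₀).orderIsoOfFin (QT_card τ _ _)).symm
      ⟨(τ (j, x)).2, (mem_QT τ).mpr (hτ (j, x))⟩ with hrk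
  show (τ.symm (i₀, (((QT τ (σ j) i₀).orderIsoOfFin (QT_card τ _ _))
      (Fin.cast (Amat_sym σ τ hτ i₀ j).symm
        (Fin.cast (Amat_sym σ τ hτ i₀ j) rk)) : Fin m))).2 = x
  have hcc : Fin.cast (Amat_sym σ τ hτ i₀ j).symm
      (Fin.cast (Amat_sym σ τ hτ i₀ j) rk) = rk := Fin.ext (by simp)
  rw [hcc, hrk, OrderIso.apply_symm_apply]
  show (τ.symm ((τ (j, x)).1, (τ (j, x)).2)).2 = x
  have hpe : ((τ (j, x)).1, (τ (j, x)).2) = τ (j, x) := rfl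
  rw [hpe, Equiv.symm_apply_apply]

lemma enc_right_inv (j : Fin n) : ∀ q, encFun σ τ hτ j (encInv σ τ hτ j q) = q := by
  rintro ⟨i, t⟩
  set w : Fin m := (((QT τ (σ j) i).orderIsoOfFin (QT_card τ _ _))
    (Fin.cast (Amat_sym σ τ hτ i j).symm t) : Fin m) with hwdef
  have hw : w ∈ QT τ (σ j) i :=
    (((QT τ (σ j) i).orderIsoOfFin (QT_card τ _ _))
      (Fin.cast (Amat_sym σ τ hτ i j).symm t)).2
  have hz : (τ (i, w)).1 = σ j := (mem_QT τ).mp hw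
  set p := τ.symm (i, w) with hpdef
  have hp : τ p = (i, w) := τ.apply_symm_apply _
  have hp1 : p.1 = j := by
    refine σ.injective ?_
    rw [← hτ p, hp, hz]
  have hτjx : τ (j, p.2) = (i, w) := by rw [← hp1]; exact hp
  show encFun σ τ hτ j p.2 = ⟨i, t⟩
  have h1 : (τ (j, p.2)).1 = i := by rw [hτjx]
  refine sigFin_ext h1 ?_
  show ((Fin.cast (Amat_sym σ τ hτ (τ (j, p.2)).1 j)
    (((QT τ (σ j) (τ (j, p.2)).1).orderIsoOfFin (QT_card τ _ _)).symm
      ⟨(τ (j, p.2)).2, (mem_QT τ).mpr (hτ (j, p.2))⟩) : Fin _) : ℕ) = (t : ℕ)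
  rw [Fin.coe_cast]
  have hv := rank_val_congr (show QT τ (σ j) (τ (j, p.2)).1 = QT τ (σ j) i by rw [h1])
    (QT_card τ _ _) (QT_card τ _ _)
    ((mem_QT τ).mpr (hτ (j, p.2))) hw (show (τ (j, p.2)).2 = w by rw [hτjx])
  have heq2 : (⟨w, hw⟩ : {z // z ∈ QT τ (σ j) i})
      = ((QT τ (σ j) i).orderIsoOfFin (QT_card τ _ _))
          (Fin.cast (Amat_sym σ τ hτ i j).symm t) := Subtype.ext rfl
  exact hv.trans (by rw [heq2, OrderIso.symm_apply_apply, Fin.coe_cast])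

def encα (j : Fin n) : Fin m ≃ Σ i, Fin (Amat τ i j) :=
  ⟨encFun σ τ hτ j, encInv σ τ hτ j, enc_left_inv σ τ hτ j, enc_right_inv σ τ hτ j⟩

end Encode

section Bridge

variable (σ : Equiv.Perm (Fin n)) {A : Fin n → Fin n → ℕ}
  (α : ∀ j, Fin m ≃ Σ i, Fin (A i j))
  (hsym : ∀ i j, A (σ j) i = A i j)

lemma QT_dec (r i : Fin n) : QT (dec σ α hsym) r i = Qs α r i := by
  ext z
  rw [mem_QT, mem_Qs]
  exact Iff.rfl

lemma Amat_dec (r i : Fin n) : Amat (dec σ α hsym) r i = A r i := by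
  show (QT (dec σ α hsym) r i).card = A r i
  rw [QT_dec, Qs_card]

lemma dec_snd_val' (τ : Equiv.Perm (Fin n × Fin m)) (hτc : ∀ p, (τ (τ p)).1 = σ p.1)
    (hdec : dec σ α hsym = τ) (p : Fin n × Fin m) :
    (((α p.1 p.2).2 : Fin (A (α p.1 p.2).1 p.1)) : ℕ)
      = ((((QT τ (σ p.1) ((τ p).1)).orderIsoOfFin (QT_card τ _ _)).symm
          ⟨(τ p).2, (mem_QT τ).mpr (hτc p)⟩ : Fin _) : ℕ) := by
  subst hdec
  set i₀ := (α p.1 p.2).1 with hi₀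
  set t : Fin (A (σ p.1) i₀) := Fin.cast (hsym i₀ p.1).symm (α p.1 p.2).2 with ht
  have hz : (dec σ α hsym p).2 = ↑(oio α (σ p.1) i₀ t) := rfl
  have hmem : ↑(oio α (σ p.1) i₀ t) ∈ Qs α (σ p.1) i₀ := (oio α (σ p.1) i₀ t).2
  have h1 := rank_val_congr (QT_dec σ α hsym (σ p.1) i₀)
    (QT_card (dec σ α hsym) _ _) (Qs_card α _ _)
    ((mem_QT _).mpr (hτc p)) hmem hz
  have h2 : (⟨↑(oio α (σ p.1) i₀ t), hmem⟩ : {z // z ∈ Qs α (σ p.1) i₀})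
      = oio α (σ p.1) i₀ t := Subtype.ext rfl
  have h3 : ((Qs α (σ p.1) i₀).orderIsoOfFin (Qs_card α _ _)).symm
      ⟨↑(oio α (σ p.1) i₀ t), hmem⟩ = t := by
    rw [h2]
    exact OrderIso.symm_apply_apply _ _
  refine Eq.trans ?_ h1.symm
  rw [h3, ht, Fin.coe_cast]

lemma dec_enc (τ : Equiv.Perm (Fin n × Fin m)) (hτc : ∀ p, (τ (τ p)).1 = σ p.1) :
    dec σ (encα σ τ hτc) (Amat_sym σ τ hτc) = τ := by
  apply Equiv.ext
  intro p
  set β := encα σ τ hτc with hβ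
  have hfst : (dec σ β (Amat_sym σ τ hτc) p).1 = (τ p).1 := rfl
  refine Prod.ext hfst (Fin.ext ?_)
  set rk : Fin (Amat τ (σ p.1) ((τ p).1)) :=
    ((QT τ (σ p.1) ((τ p).1)).orderIsoOfFin (QT_card τ _ _)).symm
      ⟨(τ p).2, (mem_QT τ).mpr (hτc p)⟩ with hrk
  have hss : Qs β (σ p.1) ((τ p).1) = QT τ (σ p.1) ((τ p).1) := by
    ext z
    rw [mem_Qs, mem_QT]
    exact Iff.rfl
  have key := nth_val_congr hss (Qs_card β (σ p.1) ((τ p).1)) (QT_card τ (σ p.1) ((τ p).1))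
    (t := Fin.cast (Amat_sym σ τ hτc ((τ p).1) p.1).symm (β p.1 p.2).2)
    (t' := rk) rfl
  refine Eq.trans ?_ (key.trans ?_)
  · rfl
  · rw [hrk, OrderIso.apply_symm_apply]

end Bridge

section Main

variable (σ : Equiv.Perm (Fin n))

abbrev Sty : Type :=
  {A : Matrix (Fin n) (Fin n) ℕ //
    ((∀ i, ∑ j, A i j = m) ∧ (∀ j, ∑ i, A i j = m)) ∧
      ∀ i j, Aᵀ (σ⁻¹ i) j = A i j}

lemma sym_of {B : Matrix (Fin n) (Fin n) ℕ}
    (hB : ∀ i j, Bᵀ (σ⁻¹ i) j = B i j) : ∀ i j, B (σ j) i = B i j := by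
  intro i j
  have := hB (σ j) i
  simp only [Matrix.transpose_apply, Equiv.Perm.inv_def, Equiv.symm_apply_apply] at this
  exact this.symm

lemma symTo {B : Matrix (Fin n) (Fin n) ℕ}
    (hs : ∀ i j, B (σ j) i = B i j) : ∀ i j, Bᵀ (σ⁻¹ i) j = B i j := by
  intro i j
  have := hs j (σ⁻¹ i)
  simp only [Equiv.Perm.inv_def, Equiv.apply_symm_apply] at this
  simpa [Matrix.transpose_apply] using this.symm

def Dmap : (Σ B : Sty (m := m) σ, ∀ j, Fin m ≃ Σ i, Fin (B.1 i j)) →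
    {τ : Equiv.Perm (Fin n × Fin m) // ∀ p, (τ (τ p)).1 = σ p.1} :=
  fun q => ⟨dec σ q.2 (sym_of σ q.1.2.2), dec_cond σ q.2 (sym_of σ q.1.2.2)⟩

lemma Dmap_bij : Function.Bijective (Dmap (m := m) σ) := by
  constructor
  · rintro ⟨⟨A, hA⟩, α⟩ ⟨⟨B, hB⟩, β⟩ h
    have hperm : dec σ α (sym_of σ hA.2) = dec σ β (sym_of σ hB.2) :=
      congrArg Subtype.val h
    have hAB : A = B := by
      funext r i
      have e1 : A r i = Amat (dec σ α (sym_of σ hA.2)) r i :=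
        (Amat_dec σ α (sym_of σ hA.2) r i).symm
      have e2 : Amat (dec σ β (sym_of σ hB.2)) r i = B r i :=
        Amat_dec σ β (sym_of σ hB.2) r i
      rw [e1, hperm, e2]
    subst hAB
    have hαβ : α = β := by
      funext j
      apply Equiv.ext
      intro x
      have hfst : (α j x).1 = (β j x).1 :=
        congrArg (fun (e : Equiv.Perm (Fin n × Fin m)) => (e (j, x)).1) hperm
      refine sigFin_ext hfst ?_
      have h1 := dec_snd_val' σ α (sym_of σ hA.2) (dec σ β (sym_of σ hB.2))
        (fun p => dec_cond σ β (sym_of σ hB.2) p) hperm (j, x)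
      have h2 := dec_snd_val' σ β (sym_of σ hB.2) (dec σ β (sym_of σ hB.2))
        (fun p => dec_cond σ β (sym_of σ hB.2) p) rfl (j, x)
      exact h1.trans h2.symm
    cases hαβ
    rfl
  · rintro ⟨τ, hτc⟩
    refine ⟨⟨⟨Amat τ, ⟨Amat_rowsum σ τ hτc, Amat_colsum τ⟩,
      symTo σ (Amat_sym σ τ hτc)⟩, encα σ τ hτc⟩, ?_⟩
    exact Subtype.ext (dec_enc σ τ hτc)

lemma card_perm_eq :
    Nat.card {τ : Equiv.Perm (Fin n × Fin m) // ∀ p, (τ (τ p)).1 = σ p.1}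
      = Nat.card (Sty (m := m) σ) * m.factorial ^ n := by
  have E1 : (Σ B : Sty (m := m) σ, ∀ j, Fin m ≃ Σ i, Fin (B.1 i j)) ≃
      {τ : Equiv.Perm (Fin n × Fin m) // ∀ p, (τ (τ p)).1 = σ p.1} :=
    Equiv.ofBijective _ (Dmap_bij σ)
  have E2 : ∀ B : Sty (m := m) σ,
      (∀ j, Fin m ≃ Σ i, Fin (B.1 i j)) ≃ (Fin n → Equiv.Perm (Fin m)) := by
    intro B
    refine Equiv.piCongrRight fun j => Equiv.equivCongr (Equiv.refl (Fin m)) ?_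
    refine Fintype.equivOfCardEq ?_
    simp [Fintype.card_sigma, B.2.1.2 j]
  have E3 : (Σ B : Sty (m := m) σ, ∀ j, Fin m ≃ Σ i, Fin (B.1 i j)) ≃
      (Sty (m := m) σ × (Fin n → Equiv.Perm (Fin m))) :=
    (Equiv.sigmaCongrRight E2).trans (Equiv.sigmaEquivProd _ _)
  rw [Nat.card_congr (E1.symm.trans E3), Nat.card_prod]
  congr 1
  simp [Nat.card_eq_fintype_card, Fintype.card_perm]

def eNM (hm : 0 < m) : Fin (n * m) ≃ Fin n × Fin m where
  toFun k := (blk hm k, ⟨(k : ℕ) % m, Nat.mod_lt _ hm⟩)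
  invFun p := ⟨(p.1 : ℕ) * m + (p.2 : ℕ), by
    calc (p.1 : ℕ) * m + (p.2 : ℕ) < (p.1 : ℕ) * m + m := by
          exact Nat.add_lt_add_left p.2.isLt _
      _ = ((p.1 : ℕ) + 1) * m := by ring
      _ ≤ n * m := Nat.mul_le_mul_right m p.1.isLt⟩
  left_inv k := by
    apply Fin.ext
    show (k : ℕ) / m * m + (k : ℕ) % m = k
    exact Nat.div_add_mod' _ _
  right_inv p := by
    have h1 : ((p.1 : ℕ) * m + (p.2 : ℕ)) / m = p.1 := by
      rw [mul_comm, Nat.mul_add_div hm, Nat.div_eq_of_lt p.2.isLt, add_zero]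
    have h2 : ((p.1 : ℕ) * m + (p.2 : ℕ)) % m = p.2 := by
      rw [mul_comm (p.1 : ℕ) m, Nat.mul_add_mod, Nat.mod_eq_of_lt p.2.isLt]
    refine Prod.ext (Fin.ext h1) (Fin.ext h2)

lemma card_transport (hm : 0 < m) :
    Nat.card {τ : Equiv.Perm (Fin (n * m)) //
        ∀ k, blk hm (τ (τ k)) = σ (blk hm k)}
      = Nat.card {τ : Equiv.Perm (Fin n × Fin m) // ∀ p, (τ (τ p)).1 = σ p.1} := by
  refine Nat.card_congr (Equiv.subtypeEquiv (Equiv.permCongr (eNM hm)) fun τ => ?_)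
  constructor
  · intro h p
    have := h ((eNM hm).symm p)
    simp only [Equiv.permCongr_apply, Equiv.symm_apply_apply]
    have hfst : ∀ q : Fin n × Fin m, q.1 = blk hm ((eNM hm).symm q) := by
      intro q
      have : (eNM hm) ((eNM hm).symm q) = q := (eNM hm).apply_symm_apply q
      calc q.1 = ((eNM hm) ((eNM hm).symm q)).1 := by rw [this]
        _ = blk hm ((eNM hm).symm q) := rfl
    rw [hfst p]
    exact this
  · intro h k
    have := h ((eNM hm) k)
    simp only [Equiv.permCongr_apply, Equiv.symm_apply_apply] at this
    exact this

end Main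

end Stmt6

/-- `(1/(m!)^n) · #{τ ∈ S_{nm} | τ²σ⁻¹ ∈ S_m^n} = #{A ∈ M(n,m) | σ·Aᵀ = A}`
for every `σ ∈ S_n`, the condition `τ²σ⁻¹ ∈ S_m^n` being expressed as `τ²` mapping each
block `P_i` onto `P_{σ(i)}`. -/
theorem stmt6 (n m : ℕ) (hn : 0 < n) (hm : 0 < m) (σ : Equiv.Perm (Fin n)) :
    ((m.factorial : ℚ) ^ n)⁻¹ *
        (Nat.card {τ : Equiv.Perm (Fin (n * m)) //
          ∀ k, blk hm (τ (τ k)) = σ (blk hm k)} : ℚ) =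
      (Nat.card {A : Matrix (Fin n) (Fin n) ℕ //
        ((∀ i, ∑ j, A i j = m) ∧ (∀ j, ∑ i, A i j = m)) ∧
          ∀ i j, Aᵀ (σ⁻¹ i) j = A i j} : ℚ) := by
  have h1 := Stmt6.card_transport σ hm
  have h2 := Stmt6.card_perm_eq (m := m) σ
  rw [h1, h2]
  have hfac : ((m.factorial : ℚ)) ^ n ≠ 0 := by positivity
  push_cast
  rw [mul_comm ((Nat.card (Stmt6.Sty σ) : ℚ)), ← mul_assoc, inv_mul_cancel₀ hfac, one_mul]
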